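/- For every finite set Q and every k ∈ ℕ, the induced-subtree ordering ≤_is is a well-quasi-order on the set of finite rooted unordered Q-labelled trees of height at most k: every infinite sequence T_1, T_2, … of such trees contains indices i < j with T_i ≤_is T_j. -/

import Mathlib

/-- Finite rooted ordered representation of finite rooted *unordered* labelled trees.
Unorderedness is handled by comparing trees up to permutation of children. -/
inductive STree (Q : Type) : Type
  | node (label : Q) (children : List (STree Q)) : STree Q

namespace STree

variable {Q : Type}

/-- The label of the root. -/
def rootLabel : STree Q → Q
  | node a _ => a

/-- The children of the root. -/
def children : STree Q → List (STree Q)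
  | node _ ts => ts

end STree

mutual
  /-- Number of nodes. -/
  def STree.size {Q : Type} : STree Q → ℕ
    | .node _ ts => 1 + STree.sizeL ts
  /-- Total number of nodes of a list of trees. -/
  def STree.sizeL {Q : Type} : List (STree Q) → ℕ
    | [] => 0
    | t :: ts => STree.size t + STree.sizeL ts
end

mutual
  /-- Height (a single node has height 0). -/
  def STree.height {Q : Type} : STree Q → ℕ
    | .node _ ts => STree.heightL ts
  /-- One plus the maximal height of a list of trees (0 for the empty list). -/
  def STree.heightL {Q : Type} : List (STree Q) → ℕ
    | [] => 0
    | t :: ts => max (STree.height t + 1) (STree.heightL ts)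
end

namespace STree

end STree

mutual
  /-- `TreeLe C C'` is the induced-subtree ordering `C ≤_is C'`: `C` is obtained from `C'`
  by deleting whole subtrees (equivalently, there is a root-preserving, label-preserving
  injection of the nodes of `C` into the nodes of `C'` such that two nodes are adjacent in
  `C` iff their images are adjacent in `C'`). -/
  inductive TreeLe {Q : Type} : STree Q → STree Q → Prop
    | node {a : Q} {ts us : List (STree Q)} :
        ForestLe ts us → TreeLe (.node a ts) (.node a us)

  /-- An (unordered) embedding of a list of trees into another: an injection matching each
  tree on the left with a distinct tree on the right that dominates it w.r.t. `TreeLe`. -/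
  inductive ForestLe {Q : Type} : List (STree Q) → List (STree Q) → Prop
    | nil (us : List (STree Q)) : ForestLe [] us
    | cons {t u : STree Q} {ts us : List (STree Q)} :
        TreeLe t u → ForestLe ts us → ForestLe (t :: ts) (u :: us)
    | skip {u : STree Q} {ts us : List (STree Q)} :
        ForestLe ts us → ForestLe ts (u :: us)
    | permR {ts us us' : List (STree Q)} :
        ForestLe ts us → us.Perm us' → ForestLe ts us'
end

mutual
  /-- Equality of trees as finite rooted *unordered* labelled trees. -/
  inductive TreeEquiv {Q : Type} : STree Q → STree Q → Prop
    | node {a : Q} {ts us : List (STree Q)} :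
        ForestEquiv ts us → TreeEquiv (.node a ts) (.node a us)

  /-- Lists of trees matched bijectively (up to permutation) by `TreeEquiv`. -/
  inductive ForestEquiv {Q : Type} : List (STree Q) → List (STree Q) → Prop
    | nil : ForestEquiv [] []
    | cons {t u : STree Q} {ts us : List (STree Q)} :
        TreeEquiv t u → ForestEquiv ts us → ForestEquiv (t :: ts) (u :: us)
    | permR {ts us us' : List (STree Q)} :
        ForestEquiv ts us → us.Perm us' → ForestEquiv ts us'
end

/-- `HasPath ps t` : there is a path from the root of `t` (inclusive) whose successive
labels are exactly the (nonempty) list `ps`. -/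
inductive HasPath {Q : Type} : List Q → STree Q → Prop
  | single (p : Q) (ts : List (STree Q)) : HasPath [p] (.node p ts)
  | cons (p : Q) {ps : List Q} {ts : List (STree Q)} {t : STree Q} :
      t ∈ ts → HasPath ps t → HasPath (p :: ps) (.node p ts)

/-- `mkChain q qs` is the path-shaped tree with labels `q, qs...`. -/
def mkChain {Q : Type} : Q → List Q → STree Q
  | q, [] => .node q []
  | q, r :: rest => .node q [mkChain r rest]

/-- Attach the (possibly empty) fresh chain labelled `qs` as a new child. -/
def attachChain {Q : Type} : List Q → List (STree Q) → List (STree Q)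
  | [], ts => ts
  | r :: rest, ts => mkChain r rest :: ts

/-- Application of an update transition `(p_0,…,p_i) →u (q_0,…,q_j)` (given as the two label
lists) to a configuration: fire along a root path labelled `p_0,…,p_i`, relabel the common
prefix, and either create fresh nodes labelled `q_{i+1},…,q_j` (if `i ≤ j`) or delete the
subtree rooted at `v_{j+1}` (if `j < i`). -/
inductive UStep {Q : Type} : List Q → List Q → STree Q → STree Q → Prop
  | last (p q : Q) (rest : List Q) (ts : List (STree Q)) :
      UStep [p] (q :: rest) (.node p ts) (.node q (attachChain rest ts))
  | delete (p q : Q) {ps : List Q} (hps : ps ≠ []) {t : STree Q} (l r : List (STree Q)) :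
      HasPath ps t →
      UStep (p :: ps) [q] (.node p (l ++ t :: r)) (.node q (l ++ r))
  | go (p q : Q) {ps qs : List Q} (hps : ps ≠ []) (hqs : qs ≠ []) {t t' : STree Q}
      (l r : List (STree Q)) :
      UStep ps qs t t' →
      UStep (p :: ps) (q :: qs) (.node p (l ++ t :: r)) (.node q (l ++ t' :: r))

/-- Application of a reset transition `(p_0,…,p_i) →r,x (q_0,…,q_i)` to a configuration:
fire along a root path labelled `p_0,…,p_i`, relabel it to `q_0,…,q_i`, and delete every
subtree rooted at a child of the last path node whose label is `x`. -/
inductive RStep {Q : Type} [DecidableEq Q] : List Q → Q → List Q → STree Q → STree Q → Prop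
  | last (p q x : Q) (ts : List (STree Q)) :
      RStep [p] x [q] (.node p ts) (.node q (ts.filter (fun t => t.rootLabel ≠ x)))
  | go (p q x : Q) {ps qs : List Q} (hps : ps ≠ []) {t t' : STree Q} (l r : List (STree Q)) :
      RStep ps x qs t t' →
      RStep (p :: ps) x (q :: qs) (.node p (l ++ t :: r)) (.node q (l ++ t' :: r))

/-- A transition of a `k`-NRCS : either an update transition or a reset transition,
presented by its label lists. -/
inductive NTrans (Q : Type) : Type
  | upd (ps qs : List Q) : NTrans Q
  | rst (ps : List Q) (x : Q) (qs : List Q) : NTrans Q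

/-- A `k`-NRCS `(Q, δ_u, δ_r)` : a finite set of update transitions
`δ_u ⊆ ⋃_{1 ≤ i,j ≤ k+1} Q^i × Q^j` and a finite set of reset transitions
`δ_r ⊆ ⋃_{1 ≤ i ≤ k} Q^i × Q × Q^i` (the state set is the ambient type `Q`). -/
structure NRCS (Q : Type) [DecidableEq Q] (k : ℕ) where
  update : Finset (List Q × List Q)
  reset : Finset (List Q × Q × List Q)
  update_wf : ∀ t ∈ update, 1 ≤ t.1.length ∧ t.1.length ≤ k + 1 ∧
      1 ≤ t.2.length ∧ t.2.length ≤ k + 1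
  reset_wf : ∀ t ∈ reset, 1 ≤ t.1.length ∧ t.1.length ≤ k ∧ t.2.2.length = t.1.length

namespace NRCS

variable {Q : Type} [DecidableEq Q] {k : ℕ}

/-- Membership of a transition in an NRCS. -/
def hasTrans (N : NRCS Q k) : NTrans Q → Prop
  | .upd ps qs => (ps, qs) ∈ N.update
  | .rst ps x qs => (ps, x, qs) ∈ N.reset

/-- `C →_t C'` : a step via the particular transition `t`. -/
def TransStep : NTrans Q → STree Q → STree Q → Prop
  | .upd ps qs, C, C' => UStep ps qs C C'
  | .rst ps x qs, C, C' => RStep ps x qs C C'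

/-- The step relation `C → C'` of the NRCS `N`. -/
def Step (N : NRCS Q k) (C C' : STree Q) : Prop :=
  ∃ t : NTrans Q, N.hasTrans t ∧ TransStep t C C'

/-- Reachability `C →* C'` (reflexive-transitive closure of the step relation). -/
def Reaches (N : NRCS Q k) : STree Q → STree Q → Prop :=
  Relation.ReflTransGen N.Step

/-- The lossy step relation: first delete some whole subtrees, then take a standard step. -/
def LossyStep (N : NRCS Q k) (C D : STree Q) : Prop :=
  ∃ C₀ : STree Q, TreeLe C₀ C ∧ N.Step C₀ D

/-- Lossy reachability. -/
def LossyReaches (N : NRCS Q k) : STree Q → STree Q → Prop :=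
  Relation.ReflTransGen N.LossyStep

end NRCS

section WqoProof

open List

variable {Q : Type}

mutual
theorem treeLe_refl : (t : STree Q) → TreeLe t t
  | .node _ ts => .node (forestLe_refl ts)
theorem forestLe_refl : (ts : List (STree Q)) → ForestLe ts ts
  | [] => .nil []
  | t :: ts => .cons (treeLe_refl t) (forestLe_refl ts)
end

theorem forestLe_of_forall₂ {ts us : List (STree Q)} (h : Forall₂ TreeLe ts us) :
    ForestLe ts us := by
  induction h with
  | nil => exact .nil []
  | cons h _ ih => exact .cons h ih

theorem forestLe_append_left {ts us : List (STree Q)} (h : ForestLe ts us) :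
    ∀ d, ForestLe ts (d ++ us)
  | [] => h
  | _ :: d => .skip (forestLe_append_left h d)

theorem forestLe_of_forall₂_subperm {ts us₀ us : List (STree Q)}
    (F : Forall₂ TreeLe ts us₀) (sp : us₀ <+~ us) : ForestLe ts us := by
  obtain ⟨w, wp, wsub⟩ := sp
  have h1 : ForestLe ts w := (forestLe_of_forall₂ F).permR wp.symm
  obtain ⟨d, hd⟩ := wsub.exists_perm_append
  exact ((forestLe_append_left h1 d).permR (List.perm_append_comm)).permR hd.symm

theorem forestLe_iff {ts us : List (STree Q)} :
    ForestLe ts us ↔ ∃ us₀, Forall₂ TreeLe ts us₀ ∧ us₀ <+~ us := by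
  constructor
  · intro h
    refine ForestLe.rec (motive_1 := fun _ _ _ => True)
      (motive_2 := fun ts us _ => ∃ us₀, Forall₂ TreeLe ts us₀ ∧ us₀ <+~ us)
      (fun _ _ => trivial)
      (fun us => ⟨[], .nil, List.nil_subperm⟩)
      (fun htu _ _ ih => ?_) (fun _ ih => ?_) (fun _ hperm ih => ?_) h
    · obtain ⟨us₀, F, w, wp, wsub⟩ := ih
      exact ⟨_ :: us₀, .cons htu F, _ :: w, wp.cons _, wsub.cons₂ _⟩
    · obtain ⟨us₀, F, sp⟩ := ih
      exact ⟨us₀, F, sp.cons_right _⟩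
    · obtain ⟨us₀, F, sp⟩ := ih
      exact ⟨us₀, F, sp.trans hperm.subperm⟩
  · rintro ⟨us₀, F, sp⟩
    exact forestLe_of_forall₂_subperm F sp

theorem my_forall₂_sublist_left {α β : Type*} {R : α → β → Prop}
    {l₁ l₂ : List α} {m : List β} (h : Forall₂ R l₂ m) (hs : l₁ <+ l₂) :
    ∃ m', m' <+ m ∧ Forall₂ R l₁ m' := by
  induction hs generalizing m with
  | slnil => exact ⟨[], nil_sublist _, by cases h; exact .nil⟩
  | cons a hsub ih =>
      cases h with
      | cons hr htail =>
          obtain ⟨m', hm', F⟩ := ih htail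
          exact ⟨m', hm'.cons _, F⟩
  | cons_cons a hsub ih =>
      cases h with
      | cons hr htail =>
          obtain ⟨m', hm', F⟩ := ih htail
          exact ⟨_ :: m', hm'.cons₂ _, .cons hr F⟩

theorem my_forall₂_perm_left {α β : Type*} {R : α → β → Prop}
    {l₁ l₂ : List α} {m : List β} (h : Forall₂ R l₁ m) (hp : l₁.Perm l₂) :
    ∃ m', m.Perm m' ∧ Forall₂ R l₂ m' := by
  induction hp generalizing m with
  | nil => cases h; exact ⟨[], .nil, .nil⟩
  | cons x _ ih =>
      cases h with
      | cons hr ht =>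
          obtain ⟨m', pm, F⟩ := ih ht
          exact ⟨_ :: m', pm.cons _, .cons hr F⟩
  | swap x y l =>
      cases h with
      | cons hr1 ht =>
          cases ht with
          | cons hr2 ht2 => exact ⟨_, .swap _ _ _, .cons hr2 (.cons hr1 ht2)⟩
  | trans p1 p2 ih1 ih2 =>
      obtain ⟨m1, pm1, F1⟩ := ih1 h
      obtain ⟨m2, pm2, F2⟩ := ih2 F1
      exact ⟨m2, pm1.trans pm2, F2⟩

theorem my_forall₂_subperm_left {α β : Type*} {R : α → β → Prop}
    {l₁ l₂ : List α} {m : List β} (h : Forall₂ R l₂ m) (sp : l₁ <+~ l₂) :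
    ∃ m', m' <+~ m ∧ Forall₂ R l₁ m' := by
  obtain ⟨w, wp, wsub⟩ := sp
  obtain ⟨m1, m1sub, F1⟩ := my_forall₂_sublist_left h wsub
  obtain ⟨m2, pm, F2⟩ := my_forall₂_perm_left F1 wp
  exact ⟨m2, ⟨m1, pm, m1sub⟩, F2⟩

theorem my_forall₂_comp {α β γ : Type*} {R : α → β → Prop} {S : β → γ → Prop}
    {T' : α → γ → Prop} {l₁ : List α} {l₂ : List β} {l₃ : List γ}
    (h1 : Forall₂ R l₁ l₂) (h2 : Forall₂ S l₂ l₃)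
    (htr : ∀ b ∈ l₂, ∀ a c, R a b → S b c → T' a c) : Forall₂ T' l₁ l₃ := by
  induction h1 generalizing l₃ with
  | nil => cases h2; exact .nil
  | cons hr ht ih =>
      cases h2 with
      | cons hs hts =>
          exact .cons (htr _ mem_cons_self _ _ hr hs)
            (ih hts fun b hb => htr b (mem_cons_of_mem _ hb))

theorem size_le_sizeL : ∀ {ts : List (STree Q)} {t : STree Q}, t ∈ ts →
    t.size ≤ STree.sizeL ts := by
  intro ts
  induction ts with
  | nil => simp
  | cons x xs ih =>
      intro t ht
      rw [STree.sizeL]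
      rcases List.mem_cons.1 ht with rfl | h
      · exact Nat.le_add_right _ _
      · exact le_trans (ih h) (Nat.le_add_left _ _)

theorem size_lt_of_mem {t : STree Q} {a : Q} {ts : List (STree Q)} (h : t ∈ ts) :
    t.size < (STree.node a ts).size := by
  rw [STree.size]
  have := size_le_sizeL h
  omega

theorem treeLe_trans_aux : ∀ n : ℕ, ∀ u : STree Q, u.size ≤ n →
    ∀ t v, TreeLe t u → TreeLe u v → TreeLe t v := by
  intro n
  induction n using Nat.strong_induction_on with
  | _ n ih =>
    rintro ⟨b, us⟩ hsize t v htu huv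
    cases htu with
    | @node _ ts _ h1 =>
      cases huv with
      | @node _ _ vs h2 =>
        refine TreeLe.node ?_
        rw [forestLe_iff] at h1 h2 ⊢
        obtain ⟨us₀, F1, sp1⟩ := h1
        obtain ⟨vs₀, F2, sp2⟩ := h2
        obtain ⟨vs₁, sp3, F3⟩ := my_forall₂_subperm_left F2 sp1
        refine ⟨vs₁, ?_, sp3.trans sp2⟩
        refine my_forall₂_comp F1 F3 ?_
        intro x hx a c h1' h2'
        have hxus : x ∈ us := sp1.subset hx
        have hlt : x.size < n := lt_of_lt_of_le (size_lt_of_mem (a := b) hxus) hsize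
        exact ih x.size hlt x le_rfl a c h1' h2'

instance : Std.Refl (α := STree Q) TreeLe := ⟨treeLe_refl⟩
instance : IsTrans (STree Q) TreeLe :=
  ⟨fun t u v h1 h2 => treeLe_trans_aux u.size u le_rfl t v h1 h2⟩
instance : IsPreorder (STree Q) TreeLe := {}

theorem forestLe_of_sublistForall₂ {ts us : List (STree Q)}
    (h : SublistForall₂ TreeLe ts us) : ForestLe ts us := by
  obtain ⟨w, F, hsub⟩ := sublistForall₂_iff.1 h
  exact forestLe_of_forall₂_subperm F hsub.subperm

theorem stree_eta (t : STree Q) : t = .node t.rootLabel t.children := by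
  cases t; rfl

theorem height_le_of_mem : ∀ {ts : List (STree Q)} {t : STree Q}, t ∈ ts →
    t.height + 1 ≤ STree.heightL ts := by
  intro ts
  induction ts with
  | nil => simp
  | cons x xs ih =>
      intro t ht
      rw [STree.heightL]
      rcases List.mem_cons.1 ht with rfl | h
      · exact le_max_left _ _
      · exact le_trans (ih h) (le_max_right _ _)

theorem pwo_step [Finite Q] (s : Set (STree Q)) (hs : s.PartiallyWellOrderedOn TreeLe) :
    {t : STree Q | ∀ c ∈ t.children, c ∈ s}.PartiallyWellOrderedOn TreeLe := by
  rw [Set.partiallyWellOrderedOn_iff_exists_lt]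
  intro f hf
  have hQ : (Set.univ : Set Q).PartiallyWellOrderedOn (· = ·) :=
    Set.Finite.partiallyWellOrderedOn Set.finite_univ
  have hL := Set.PartiallyWellOrderedOn.partiallyWellOrderedOn_sublistForall₂ TreeLe hs
  have hprod := hQ.prod hL
  have hg : ∀ n, ((f n).rootLabel, (f n).children) ∈
      (Set.univ : Set Q) ×ˢ {l : List (STree Q) | ∀ x, x ∈ l → x ∈ s} :=
    fun n => ⟨trivial, hf n⟩
  obtain ⟨m, n, hmn, h1, h2⟩ := hprod.exists_lt (f := fun n => ((f n).rootLabel, (f n).children)) hg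
  refine ⟨m, n, hmn, ?_⟩
  rw [stree_eta (f m), stree_eta (f n)]
  simp only at h1 h2
  rw [h1]
  exact TreeLe.node (forestLe_of_sublistForall₂ h2)

theorem pwo_height [Finite Q] (k : ℕ) :
    {t : STree Q | t.height ≤ k}.PartiallyWellOrderedOn TreeLe := by
  induction k with
  | zero =>
      refine (pwo_step ∅ (Set.partiallyWellOrderedOn_empty _)).mono ?_
      rintro ⟨a, ts⟩ ht c hc
      exfalso
      simp only [STree.children] at hc
      have h1 := height_le_of_mem hc
      have h2 : (STree.node a ts).height ≤ 0 := ht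
      rw [STree.height] at h2
      omega
  | succ k ih =>
      refine (pwo_step _ ih).mono ?_
      rintro ⟨a, ts⟩ ht c hc
      simp only [STree.children] at hc
      have h1 := height_le_of_mem hc
      have h2 : (STree.node a ts).height ≤ k + 1 := ht
      rw [STree.height] at h2
      show c.height ≤ k
      omega

end WqoProof

/-- Wqo of the induced-subtree ordering on bounded-height labelled trees:
for every finite set `Q` and every `k ∈ ℕ`, the induced-subtree ordering `≤_is` is a
well-quasi-order on the set of finite rooted unordered `Q`-labelled trees of height at most
`k`: every infinite sequence `T_1, T_2, …` of such trees contains indices `i < j` with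
`T_i ≤_is T_j`. -/
theorem treeLe_wqo_of_bounded_height (Q : Type) [Finite Q] (k : ℕ)
    (T : ℕ → STree Q) (hT : ∀ n, (T n).height ≤ k) :
    ∃ i j : ℕ, i < j ∧ TreeLe (T i) (T j) := by
  obtain ⟨i, j, hij, h⟩ := (pwo_height (Q := Q) k).exists_lt (f := T) fun n => hT n
  exact ⟨i, j, hij, h⟩
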